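/- Let f : ℝ → ℝ be continuous with f(τ) > 0 for all τ, and suppose that (log f(τ))/τ tends to a finite limit k_c as τ → −∞. If μ is a real number with μ > −k_c, then for every t ∈ ℝ the function τ ↦ f(τ)·exp(μ·(τ − t)) IS integrable on the half-line (−∞, t]. -/

import Mathlib

open MeasureTheory Filter Set

theorem aux_exp_integrable_Iic {b : ℝ} (hb : 0 < b) (c : ℝ) :
    IntegrableOn (fun x => Real.exp (b * x)) (Iic c) := by
  have h1 : Integrable ((Iic (b * c)).indicator Real.exp) :=
    (integrable_indicator_iff measurableSet_Iic).2 (integrableOn_exp_Iic (b * c))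
  have h2 : Integrable (fun x => (Iic (b * c)).indicator Real.exp (b * x)) :=
    (MeasureTheory.integrable_comp_mul_left_iff _ hb.ne').2 h1
  have he : (fun x => (Iic (b * c)).indicator Real.exp (b * x))
      = (Iic c).indicator (fun x => Real.exp (b * x)) := by
    funext x
    by_cases hx : x ≤ c
    · rw [Set.indicator_of_mem (by exact mem_Iic.2 ((mul_le_mul_iff_of_pos_left hb).2 hx)),
        Set.indicator_of_mem (mem_Iic.2 hx)]
    · rw [Set.indicator_of_notMem, Set.indicator_of_notMem (by simpa using hx)]
      simp only [mem_Iic, not_le] at hx ⊢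
      exact (mul_lt_mul_iff_of_pos_left hb).2 hx
  rw [he] at h2
  exact (integrable_indicator_iff measurableSet_Iic).1 h2

/-- Convergence half of Theorem 1: if the critical exponent of the positive continuous
kernel magnitude `f` is `k_c = lim_{τ→−∞} (log f τ)/τ` and `μ > −k_c`, then for every `t`
the weighted kernel `τ ↦ f τ · exp (μ (τ − t))` is integrable on `(−∞, t]`. -/
theorem stmt_1 (f : ℝ → ℝ) (hf : Continuous f) (hfpos : ∀ τ, 0 < f τ) (k_c : ℝ)
    (hlim : Tendsto (fun τ => Real.log (f τ) / τ) atBot (nhds k_c))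
    (μ : ℝ) (hμ : -k_c < μ) :
    ∀ t : ℝ, IntegrableOn (fun τ => f τ * Real.exp (μ * (τ - t))) (Iic t) := by
  intro t
  set ε : ℝ := (k_c + μ) / 2 with hε
  have hεpos : 0 < ε := by rw [hε]; linarith
  have hev : ∀ᶠ τ in atBot, k_c - ε < Real.log (f τ) / τ :=
    hlim.eventually (eventually_gt_nhds (by linarith : k_c - ε < k_c))
  obtain ⟨T0, hT0⟩ := eventually_atBot.mp hev
  set T : ℝ := min (min T0 (-1)) t with hT
  have hTt : T ≤ t := min_le_right _ _
  have hTneg : T < 0 := lt_of_le_of_lt (le_trans (min_le_left _ _) (min_le_right _ _)) (by norm_num)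
  have hTT0 : T ≤ T0 := le_trans (min_le_left _ _) (min_le_left _ _)
  have hcont : Continuous (fun τ => f τ * Real.exp (μ * (τ - t))) := by
    exact hf.mul (Real.continuous_exp.comp (by continuity))
  have hbound : ∀ τ ≤ T, f τ ≤ Real.exp ((k_c - ε) * τ) := by
    intro τ hτ
    have hτ0 : τ < 0 := lt_of_le_of_lt hτ hTneg
    have h1 : k_c - ε < Real.log (f τ) / τ := hT0 τ (hτ.trans hTT0)
    have h2 : Real.log (f τ) ≤ (k_c - ε) * τ := by
      have := h1
      rw [lt_div_iff_of_neg hτ0] at this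
      linarith
    calc f τ = Real.exp (Real.log (f τ)) := (Real.exp_log (hfpos τ)).symm
      _ ≤ Real.exp ((k_c - ε) * τ) := Real.exp_le_exp.mpr h2
  -- integrable on Iic T
  have hIicT : IntegrableOn (fun τ => f τ * Real.exp (μ * (τ - t))) (Iic T) := by
    have hg : IntegrableOn (fun x => Real.exp (-(μ * t)) * Real.exp (ε * x)) (Iic T) :=
      (aux_exp_integrable_Iic hεpos T).const_mul _
    refine hg.mono' (hcont.aestronglyMeasurable.restrict) ?_
    filter_upwards [ae_restrict_mem measurableSet_Iic] with τ hτ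
    have h1 : f τ ≤ Real.exp ((k_c - ε) * τ) := hbound τ hτ
    have hnn : 0 ≤ f τ * Real.exp (μ * (τ - t)) :=
      mul_nonneg (hfpos τ).le (Real.exp_pos _).le
    rw [Real.norm_of_nonneg hnn]
    calc f τ * Real.exp (μ * (τ - t))
        ≤ Real.exp ((k_c - ε) * τ) * Real.exp (μ * (τ - t)) := by
          exact mul_le_mul_of_nonneg_right h1 (Real.exp_pos _).le
      _ = Real.exp (-(μ * t)) * Real.exp (ε * τ) := by
          rw [← Real.exp_add, ← Real.exp_add]
          congr 1
          rw [hε]; ring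
  have hIcc : IntegrableOn (fun τ => f τ * Real.exp (μ * (τ - t))) (Icc T t) :=
    hcont.continuousOn.integrableOn_Icc
  have := hIicT.union hIcc
  rwa [Iic_union_Icc_eq_Iic hTt] at this
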